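/- arXiv:2401.02577 — 5 statements merged into one kernel-verified Lean document; each statement's English description precedes it below -/
import Mathlib

section
/- Non-archimedean identity theorem (the Proposition of §1.2.3): let m be a natural number and let f : (Fin m → ℤ) → Λ be strictly convergent relative to γ = 0, i.e. for every r ∈ ℝ the set {ν | f ν ≠ 0 and v(f ν) ≤ r} is finite. Suppose that for every y : Fin m → Λ with v(y i) = 0 for all i, the family ν ↦ f ν · ∏_i (y i)^(ν i) is a summable family whose sum equals 0. Then f ν = 0 for every ν. (In the paper's notation: a convergent Laurent formal power series f = Σ_ν c_ν Y^ν over Λ that vanishes on U_Λ^m is identically zero.) -/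
/-- The Novikov-type field: Hahn series with real exponents and complex coefficients. -/
noncomputable abbrev Λ : Type := HahnSeries ℝ ℂ

/-- The canonical additive valuation on `Λ`. -/
noncomputable def v (x : Λ) : WithTop ℝ := HahnSeries.addVal ℝ ℂ x

private lemma natAbs_le_imp (n : ℤ) (K : ℕ) (h : n.natAbs ≤ K) : 0 ≤ n + K := by omega

private lemma toNat_inj_of_nonneg {n n' : ℤ} (h1 : 0 ≤ n) (h2 : 0 ≤ n')
    (h : n.toNat = n'.toNat) : n = n' := by omega

open MvPolynomial in
/-- A Laurent polynomial over `ℂ` vanishing on `(ℂ*)^m` has zero coefficients. -/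
private lemma laurent_vanish {m : ℕ} (S : Finset (Fin m → ℤ)) (a : (Fin m → ℤ) → ℂ)
    (h : ∀ c : Fin m → ℂ, (∀ i, c i ≠ 0) → ∑ ν ∈ S, a ν * ∏ i, c i ^ (ν i) = 0) :
    ∀ ν ∈ S, a ν = 0 := by
  classical
  obtain ⟨N, hNν⟩ : ∃ N : ℕ, ∀ ν ∈ S, ∀ i, 0 ≤ ν i + N := by
    refine ⟨S.sup (fun ν => Finset.univ.sup fun i => (ν i).natAbs), ?_⟩
    intro ν hν i
    have h1 : (ν i).natAbs ≤ Finset.univ.sup fun j => (ν j).natAbs :=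
      Finset.le_sup (f := fun j => (ν j).natAbs) (Finset.mem_univ i)
    have h2 : (Finset.univ.sup fun j => (ν j).natAbs)
        ≤ S.sup (fun ν => Finset.univ.sup fun i => (ν i).natAbs) :=
      Finset.le_sup (f := fun ν => Finset.univ.sup fun j => (ν j).natAbs) hν
    exact natAbs_le_imp _ _ (h1.trans h2)
  set d : (Fin m → ℤ) → (Fin m →₀ ℕ) :=
    fun ν => Finsupp.equivFunOnFinite.symm (fun i => (ν i + N).toNat) with hd
  have hdapp : ∀ ν i, d ν i = (ν i + N).toNat := fun _ _ => rfl
  set P : MvPolynomial (Fin m) ℂ := ∑ ν ∈ S, monomial (d ν) (a ν) with hP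
  clear_value d P
  have hevalP : ∀ c : Fin m → ℂ, (∀ i, c i ≠ 0) → eval c P = 0 := by
    intro c hc
    have h1 : eval c P = ∑ ν ∈ S, a ν * ∏ i, c i ^ ((ν i + N).toNat) := by
      rw [hP, map_sum]
      refine Finset.sum_congr rfl fun ν hν => ?_
      rw [eval_monomial]
      congr 1
      rw [Finsupp.prod_fintype]
      · exact Finset.prod_congr rfl fun i _ => by rw [hdapp]
      · intro i; exact pow_zero _
    have h2 : ∀ ν ∈ S, a ν * ∏ i, c i ^ ((ν i + N).toNat)
        = (a ν * ∏ i, c i ^ (ν i)) * ∏ i, c i ^ (N : ℤ) := by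
      intro ν hν
      rw [mul_assoc, ← Finset.prod_mul_distrib]
      congr 1
      refine Finset.prod_congr rfl fun i _ => ?_
      rw [← zpow_natCast (c i), Int.toNat_of_nonneg (hNν ν hν i), zpow_add₀ (hc i)]
    rw [h1, Finset.sum_congr rfl h2, ← Finset.sum_mul, h c hc, zero_mul]
  have hQ : P * ∏ i, (X i : MvPolynomial (Fin m) ℂ) = 0 := by
    apply MvPolynomial.funext
    intro c
    rw [map_mul, map_prod, map_zero]
    by_cases hc : ∀ i, c i ≠ 0
    · rw [hevalP c hc, zero_mul]
    · push_neg at hc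
      obtain ⟨i, hi⟩ := hc
      have : ∏ j, eval c (X j : MvPolynomial (Fin m) ℂ) = 0 :=
        Finset.prod_eq_zero (Finset.mem_univ i) (by simp [hi])
      rw [this, mul_zero]
  have hP0 : P = 0 := by
    rcases mul_eq_zero.mp hQ with h' | h'
    · exact h'
    · exact (Finset.prod_ne_zero_iff.mpr (fun i _ => X_ne_zero i) h').elim
  intro ν₀ hν₀
  have hinj : ∀ ν ∈ S, d ν = d ν₀ → ν = ν₀ := by
    intro ν hν hdd
    funext i
    have h3 : (ν i + N).toNat = (ν₀ i + N).toNat := by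
      have h4 := congrFun (congrArg (fun g : Fin m →₀ ℕ => (g : Fin m → ℕ)) hdd) i
      simpa only [hdapp] using h4
    have h5 := toNat_inj_of_nonneg (hNν ν hν i) (hNν ν₀ hν₀ i) h3
    omega
  have hcoeff : coeff (d ν₀) P = a ν₀ := by
    rw [hP, MvPolynomial.coeff_sum, Finset.sum_eq_single ν₀]
    · rw [coeff_monomial, if_pos rfl]
    · intro ν hν hne
      rw [coeff_monomial, if_neg (fun hdd => hne (hinj ν hν hdd))]
    · intro h'; exact absurd hν₀ h'
  rw [hP0, coeff_zero] at hcoeff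
  exact hcoeff.symm

/-- Non-archimedean identity theorem: a strictly convergent Laurent formal power series
`f = Σ_ν c_ν Y^ν` over `Λ` that vanishes on `U_Λ^m` is identically zero. -/
theorem identity_theorem (m : ℕ) (f : (Fin m → ℤ) → Λ)
    (hconv : ∀ r : ℝ, {ν : Fin m → ℤ | f ν ≠ 0 ∧ v (f ν) ≤ (r : WithTop ℝ)}.Finite)
    (hvan : ∀ y : Fin m → Λ, (∀ i, v (y i) = 0) →
      ∃ s : HahnSeries.SummableFamily ℝ ℂ (Fin m → ℤ),
        (∀ ν, s ν = f ν * ∏ i, (y i) ^ (ν i)) ∧ s.hsum = 0) :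
    ∀ ν, f ν = 0 := by
  classical
  intro ν₀
  ext r
  rw [HahnSeries.coeff_zero]
  set Sf : Finset (Fin m → ℤ) := (hconv r).toFinset with hSf
  have hsupp : ∀ ν, (f ν).coeff r ≠ 0 → ν ∈ Sf := by
    intro ν hν
    rw [hSf, Set.Finite.mem_toFinset]
    refine ⟨fun h0 => hν (by simp [h0]), ?_⟩
    exact HahnSeries.addVal_le_of_coeff_ne_zero hν
  have hmain : ∀ c : Fin m → ℂ, (∀ i, c i ≠ 0) →
      ∑ ν ∈ Sf, (f ν).coeff r * ∏ i, c i ^ (ν i) = 0 := by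
    intro c hc
    obtain ⟨s, hs, hsum0⟩ := hvan (fun i => HahnSeries.C (c i)) (fun i => by
      show HahnSeries.addVal ℝ ℂ (HahnSeries.C (c i)) = 0
      rw [HahnSeries.C_apply,
        HahnSeries.addVal_apply_of_ne (HahnSeries.single_ne_zero (hc i))]
      exact_mod_cast HahnSeries.order_single (hc i))
    have hcoeff : ∀ ν, (s ν).coeff r = (f ν).coeff r * ∏ i, c i ^ (ν i) := by
      intro ν
      rw [hs]
      have hC : ∏ i, (HahnSeries.C (c i) : Λ) ^ (ν i)
          = HahnSeries.C (∏ i, c i ^ (ν i)) := by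
        rw [map_prod]
        exact Finset.prod_congr rfl fun i _ => (map_zpow₀ (HahnSeries.C : ℂ →+* Λ) _ _).symm
      rw [hC]
      exact HahnSeries.coeff_mul_single_zero
    have h0 : s.hsum.coeff r = 0 := by rw [hsum0]; rfl
    rw [HahnSeries.SummableFamily.coeff_hsum] at h0
    rw [finsum_eq_finset_sum_of_support_subset _ (s := Sf) (fun ν hν => by
      have hν' : (s ν).coeff r ≠ 0 := hν
      rw [hcoeff ν] at hν'
      exact hsupp ν fun h' => hν' (by rw [h', zero_mul]))] at h0
    rw [← h0]
    exact Finset.sum_congr rfl fun ν _ => (hcoeff ν).symm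
  by_contra hne
  exact hne (laurent_vanish Sf (fun ν => (f ν).coeff r) hmain ν₀ (hsupp ν₀ hne))
end

section
/- Well-definedness of evaluation of strictly convergent series (the claim of §3.1 that every element of Λ⟨H₁(L); Δ⟩ defines a function on H¹(L; U_Λ) × Δ): let m ∈ ℕ, γ : Fin m → ℝ, and let f : (Fin m → ℤ) → Λ be strictly convergent relative to γ. Then for every y : Fin m → Λ with v(y i) = 0 for all i, the family ν ↦ f ν · T^(Σ_i (ν i)·(γ i)) · ∏_i (y i)^(ν i) is a summable family; hence the evaluation f(y, γ) = Σ_ν f ν · T^(⟨ν,γ⟩) · y^ν is a well-defined element of Λ. -/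
/-- Well-definedness of evaluation of strictly convergent series: if `f` is strictly
convergent relative to `γ`, then for every `y` with `v (y i) = 0` for all `i`, the family
`ν ↦ f ν · T^(⟨ν,γ⟩) · y^ν` is a summable family, so the evaluation `f(y, γ)` is a
well-defined element of `Λ`. -/
theorem evaluation_well_defined (m : ℕ) (γ : Fin m → ℝ) (f : (Fin m → ℤ) → Λ)
    (hconv : ∀ r : ℝ, {ν : Fin m → ℤ | f ν ≠ 0 ∧
      v (f ν) + ((∑ i, (ν i : ℝ) * γ i : ℝ) : WithTop ℝ) ≤ (r : WithTop ℝ)}.Finite)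
    (y : Fin m → Λ) (hy : ∀ i, v (y i) = 0) :
    ∃ s : HahnSeries.SummableFamily ℝ ℂ (Fin m → ℤ),
      ∀ ν, s ν = f ν * HahnSeries.single (∑ i, (ν i : ℝ) * γ i) (1 : ℂ) *
        ∏ i, (y i) ^ (ν i) := by
  classical
  set a : (Fin m → ℤ) → Λ := fun ν =>
    f ν * HahnSeries.single (∑ i, (ν i : ℝ) * γ i) (1 : ℂ) * ∏ i, (y i) ^ (ν i) with ha
  -- valuation of zpow of units is zero
  have hyzpow : ∀ (i : Fin m) (n : ℤ), v ((y i) ^ n) = 0 := by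
    intro i n
    cases n with
    | ofNat k =>
        rw [Int.ofNat_eq_coe, zpow_natCast]
        show HahnSeries.addVal ℝ ℂ ((y i) ^ k) = 0
        rw [AddValuation.map_pow]
        have := hy i
        unfold v at this
        rw [this, smul_zero]
    | negSucc k =>
        rw [zpow_negSucc]
        show HahnSeries.addVal ℝ ℂ (((y i) ^ (k + 1))⁻¹) = 0
        rw [AddValuation.map_inv, AddValuation.map_pow]
        have := hy i
        unfold v at this
        rw [this, smul_zero, neg_zero]
  have hprod : ∀ ν : Fin m → ℤ, v (∏ i, (y i) ^ (ν i)) = 0 := by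
    intro ν
    have : ∀ s : Finset (Fin m), v (∏ i ∈ s, (y i) ^ (ν i)) = 0 := by
      intro s
      induction s using Finset.induction with
      | empty =>
          simp only [Finset.prod_empty]
          exact AddValuation.map_one _
      | @insert j t hx ih =>
          rw [Finset.prod_insert hx]
          show HahnSeries.addVal ℝ ℂ _ = 0
          rw [AddValuation.map_mul]
          have h1 := hyzpow j (ν j)
          unfold v at h1 ih
          rw [h1, ih, add_zero]
    exact this Finset.univ
  -- valuation of the terms
  have hval : ∀ ν : Fin m → ℤ,
      v (a ν) = v (f ν) + ((∑ i, (ν i : ℝ) * γ i : ℝ) : WithTop ℝ) := by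
    intro ν
    show HahnSeries.addVal ℝ ℂ _ = _
    rw [ha]
    simp only
    rw [AddValuation.map_mul, AddValuation.map_mul]
    have h1 : HahnSeries.addVal ℝ ℂ
        (HahnSeries.single (∑ i, (ν i : ℝ) * γ i) (1 : ℂ)) =
        ((∑ i, (ν i : ℝ) * γ i : ℝ) : WithTop ℝ) := by
      rw [HahnSeries.addVal_apply, HahnSeries.orderTop_single one_ne_zero]
    have h2 := hprod ν
    unfold v at h2
    rw [h1, h2, add_zero]
    rfl
  -- membership in the convergence set from small support elements
  have hsupp : ∀ (r : ℝ) (ν : Fin m → ℤ) (g : ℝ), g ∈ (a ν).support → g ≤ r →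
      ν ∈ {ν : Fin m → ℤ | f ν ≠ 0 ∧
        v (f ν) + ((∑ i, (ν i : ℝ) * γ i : ℝ) : WithTop ℝ) ≤ (r : WithTop ℝ)} := by
    intro r ν g hg hgr
    have hne : a ν ≠ 0 := by
      intro h0
      rw [h0] at hg
      simp at hg
    have hfne : f ν ≠ 0 := by
      intro h0
      apply hne
      rw [ha]
      simp [h0]
    refine ⟨hfne, ?_⟩
    have hle : HahnSeries.addVal ℝ ℂ (a ν) ≤ (g : WithTop ℝ) :=
      HahnSeries.addVal_le_of_coeff_ne_zero hg
    have := hval ν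
    unfold v at this ⊢
    rw [← this]
    exact le_trans hle (WithTop.coe_le_coe.mpr hgr)
  -- finitely many terms with support meeting (-∞, g]
  have hco : ∀ g : ℝ, {ν : Fin m → ℤ | (a ν).coeff g ≠ 0}.Finite := by
    intro g
    apply (hconv g).subset
    intro ν hν
    exact hsupp g ν g hν le_rfl
  -- the union of supports is partially well ordered
  have hpwo : Set.IsPWO (⋃ ν : Fin m → ℤ, (a ν).support) := by
    rw [Set.isPWO_iff_isWF]
    rw [Set.isWF_iff_no_descending_seq]
    intro g hg hmem
    have hνex : ∀ n : ℕ, ∃ ν : Fin m → ℤ, g n ∈ (a ν).support := by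
      intro n
      have := hmem n
      simpa using this
    choose ν hν using hνex
    set S := {ν : Fin m → ℤ | f ν ≠ 0 ∧
        v (f ν) + ((∑ i, (ν i : ℝ) * γ i : ℝ) : WithTop ℝ) ≤ ((g 0 : ℝ) : WithTop ℝ)} with hS
    have hFS : ∀ n, ν n ∈ S := fun n =>
      hsupp (g 0) (ν n) (g n) (hν n) (hg.antitone (Nat.zero_le n))
    haveI : Finite S := (hconv (g 0)).to_subtype
    obtain ⟨ν', hfib⟩ := Finite.exists_infinite_fiber (fun n : ℕ => (⟨ν n, hFS n⟩ : S))
    set T : Set ℕ := (fun n : ℕ => (⟨ν n, hFS n⟩ : S)) ⁻¹' {ν'} with hT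
    haveI : Infinite T := hfib
    have hWF := (a (ν' : Fin m → ℤ)).isWF_support
    rw [Set.isWF_iff_no_descending_seq] at hWF
    have hmono : StrictMono (fun k : ℕ => ((Nat.Subtype.orderIsoOfNat T k : T) : ℕ)) :=
      fun _ _ h => (Nat.Subtype.orderIsoOfNat T).strictMono h
    refine hWF (fun k => g ((Nat.Subtype.orderIsoOfNat T k : T) : ℕ))
      (fun _ _ h => hg (hmono h)) ?_
    intro k
    have hk : ((Nat.Subtype.orderIsoOfNat T k : ℕ)) ∈ T :=
      (Nat.Subtype.orderIsoOfNat T k).2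
    have h2 : (⟨ν ((Nat.Subtype.orderIsoOfNat T k : ℕ)), hFS _⟩ : S) = ν' := hk
    have h3 : ν ((Nat.Subtype.orderIsoOfNat T k : ℕ)) = (ν' : Fin m → ℤ) :=
      congrArg Subtype.val h2
    rw [← h3]
    exact hν _
  exact ⟨⟨a, hpwo, hco⟩, fun ν => rfl⟩
end

section
/- Exponential bijection from Λ₊ onto 1 + Λ₊: for every x ∈ Λ with v(x) > 0, the family ℕ → Λ given by k ↦ (k!)⁻¹ • x^k is a summable family; write exp(x) for its sum. Then v(exp(x) − 1) > 0, and the map x ↦ exp(x) is a bijection from Λ₊ = {x ∈ Λ | v(x) > 0} onto 1 + Λ₊ = {y ∈ Λ | v(y − 1) > 0}. -/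
open Classical

/-- The exponential of a Hahn series: the sum of the summable family `k ↦ (k!)⁻¹ • x^k`
whenever that family is summable (and `0` otherwise). -/
noncomputable def Exp (x : Λ) : Λ :=
  if h : ∃ s : HahnSeries.SummableFamily ℝ ℂ ℕ,
      ∀ k : ℕ, s k = ((k.factorial : ℚ)⁻¹) • x ^ k
  then h.choose.hsum else 0

namespace ExpAux

open HahnSeries

/-! ### Scalar arithmetic -/

lemma qsmul_eq_smul (q : ℚ) (x : Λ) : q • x = (q : ℂ) • x := by
  ext g
  rw [HahnSeries.coeff_smul, HahnSeries.coeff_smul, Rat.smul_def, smul_eq_mul]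

lemma qsmul_eq_C_mul (q : ℚ) (x : Λ) : q • x = C (q : ℂ) * x := by
  rw [qsmul_eq_smul, ← single_zero_mul_eq_smul]; rfl

lemma nsmul_eq_C_mul (n : ℕ) (x : Λ) : n • x = C (n : ℂ) * x := by
  have h : n • x = (n : ℂ) • x := by
    ext g
    rw [HahnSeries.coeff_smul, HahnSeries.coeff_smul, smul_eq_mul]
    simp
  rw [h, ← single_zero_mul_eq_smul]; rfl

/-! ### orderTop basics -/

lemma le_orderTop_of {x : Λ} {c : WithTop ℝ}
    (h : ∀ g : ℝ, x.coeff g ≠ 0 → c ≤ (g : WithTop ℝ)) : c ≤ x.orderTop := by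
  by_cases hx : x = 0
  · simp [hx]
  · rw [orderTop_of_ne_zero hx]
    exact h _ (coeff_orderTop_ne (orderTop_of_ne_zero hx))

lemma orderTop_le_qsmul (q : ℚ) (x : Λ) : x.orderTop ≤ (q • x).orderTop := by
  refine le_orderTop_of fun g hg => orderTop_le_of_coeff_ne_zero ?_
  rw [HahnSeries.coeff_smul] at hg
  exact fun h => hg (by rw [h, smul_zero])

lemma le_orderTop_hsum {ι : Type} (s : SummableFamily ℝ ℂ ι) {c : WithTop ℝ}
    (h : ∀ i, c ≤ (s i).orderTop) : c ≤ s.hsum.orderTop := by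
  refine le_orderTop_of fun g hg => ?_
  by_contra hc
  push_neg at hc
  apply hg
  rw [SummableFamily.coeff_hsum]
  exact finsum_eq_zero_of_forall_eq_zero fun i =>
    coeff_eq_zero_of_lt_orderTop (lt_of_lt_of_le hc (h i))

lemma orderTop_mul_ge {x y : Λ} {a b : WithTop ℝ} (ha : a ≤ x.orderTop) (hb : b ≤ y.orderTop) :
    a + b ≤ (x * y).orderTop :=
  le_trans (add_le_add ha hb) orderTop_add_le_mul

lemma orderTop_pow_nonneg {x : Λ} (hx : 0 ≤ x.orderTop) : ∀ k : ℕ, 0 ≤ (x ^ k).orderTop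
  | 0 => by rw [pow_zero, orderTop_one]
  | (k+1) => by
      rw [pow_succ]
      simpa using orderTop_mul_ge (orderTop_pow_nonneg hx k) hx

lemma orderTop_pow_ge {x : Λ} (hx : 0 < x.orderTop) :
    ∀ k : ℕ, x.orderTop + x.orderTop ≤ (x ^ (k + 2)).orderTop
  | 0 => by rw [pow_two]; exact orderTop_mul_ge le_rfl le_rfl
  | (k+1) => by
      rw [pow_succ]
      calc x.orderTop + x.orderTop
          ≤ (x ^ (k+2)).orderTop + x.orderTop :=
            add_le_add ((le_add_of_nonneg_left hx.le).trans (orderTop_pow_ge hx k)) le_rfl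
        _ ≤ _ := orderTop_add_le_mul

/-! ### The exponential family -/

noncomputable def expFam (x : Λ) (hx : 0 < x.orderTop) : SummableFamily ℝ ℂ ℕ where
  toFun k := ((k.factorial : ℚ)⁻¹) • x ^ k
  isPWO_iUnion_support' := by
    refine (SummableFamily.powers x).isPWO_iUnion_support.mono ?_
    refine Set.iUnion_mono fun k => ?_
    intro g hg
    rw [mem_support, HahnSeries.coeff_smul] at hg
    have hxk : (x ^ k).coeff g ≠ 0 := fun h => hg (by rw [h, smul_zero])
    simpa [SummableFamily.powers_of_orderTop_pos hx, mem_support] using hxk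
  finite_co_support' g := by
    refine (Set.Finite.subset ((SummableFamily.powers x).finite_co_support g)) fun k hk => ?_
    have hk' : (((k.factorial : ℚ)⁻¹) • x ^ k).coeff g ≠ 0 := hk
    rw [HahnSeries.coeff_smul] at hk'
    have hxk : (x ^ k).coeff g ≠ 0 := fun h => hk' (by rw [h, smul_zero])
    simpa [SummableFamily.powers_of_orderTop_pos hx] using hxk

@[simp] lemma expFam_apply (x : Λ) (hx : 0 < x.orderTop) (k : ℕ) :
    expFam x hx k = ((k.factorial : ℚ)⁻¹) • x ^ k := rfl

lemma exp_summable (x : Λ) (hx : 0 < x.orderTop) :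
    ∃ s : SummableFamily ℝ ℂ ℕ, ∀ k : ℕ, s k = ((k.factorial : ℚ)⁻¹) • x ^ k :=
  ⟨expFam x hx, fun _ => rfl⟩

lemma exp_eq (x : Λ) (hx : 0 < x.orderTop) : Exp x = (expFam x hx).hsum := by
  rw [Exp, dif_pos (exp_summable x hx)]
  congr 1
  exact SummableFamily.ext fun k => by
    rw [(exp_summable x hx).choose_spec k, expFam_apply]

lemma exp_zero : Exp 0 = 1 := by
  have h0 : (0 : WithTop ℝ) < (0 : Λ).orderTop := by
    rw [orderTop_zero]; exact WithTop.coe_lt_top 0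
  rw [exp_eq 0 h0]
  have h : expFam 0 h0 = SummableFamily.ofFinsupp (Finsupp.single 0 1) := by
    refine SummableFamily.ext fun k => ?_
    match k with
    | 0 => simp [SummableFamily.coe_ofFinsupp]
    | (k+1) => simp [SummableFamily.coe_ofFinsupp, zero_pow, Finsupp.single_apply]
  rw [h, SummableFamily.hsum_ofFinsupp, Finsupp.sum_single_index rfl]
  rfl

/-! ### Cauchy products and regrouping -/

lemma coeff_sum {ι : Type*} (F : ι → Λ) (T : Finset ι) (g : ℝ) :
    (∑ i ∈ T, F i).coeff g = ∑ i ∈ T, (F i).coeff g := by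
  induction T using Finset.induction with
  | empty => simp
  | insert a s h ih =>
      rw [Finset.sum_insert h, Finset.sum_insert h, HahnSeries.coeff_add, ih]

noncomputable def groupFam (u : SummableFamily ℝ ℂ (ℕ × ℕ)) : SummableFamily ℝ ℂ ℕ where
  toFun k := ∑ p ∈ Finset.HasAntidiagonal.antidiagonal k, u p
  isPWO_iUnion_support' := by
    refine u.isPWO_iUnion_support.mono ?_
    intro g hg
    simp only [Set.mem_iUnion, mem_support] at hg ⊢
    obtain ⟨k, hk⟩ := hg
    rw [coeff_sum] at hk
    obtain ⟨p, _, hp⟩ := Finset.exists_ne_zero_of_sum_ne_zero hk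
    exact ⟨p, fun h => hp (by rw [h])⟩
  finite_co_support' g := by
    refine (Set.Finite.subset (Set.Finite.image (fun p => p.1 + p.2) (u.finite_co_support g))) fun k hk => ?_
    have hk' : (∑ p ∈ Finset.HasAntidiagonal.antidiagonal k, u p).coeff g ≠ 0 := hk
    rw [coeff_sum] at hk'
    obtain ⟨p, hpmem, hp⟩ := Finset.exists_ne_zero_of_sum_ne_zero hk'
    exact ⟨p, hp, Finset.HasAntidiagonal.mem_antidiagonal.mp hpmem⟩

@[simp] lemma groupFam_apply (u : SummableFamily ℝ ℂ (ℕ × ℕ)) (k : ℕ) :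
    groupFam u k = ∑ p ∈ Finset.HasAntidiagonal.antidiagonal k, u p := rfl

lemma hsum_groupFam (u : SummableFamily ℝ ℂ (ℕ × ℕ)) : (groupFam u).hsum = u.hsum := by
  ext g
  set T : Finset (ℕ × ℕ) := (show (Function.support fun p => (u p).coeff g).Finite from u.finite_co_support g).toFinset with hT
  have hTmem : ∀ p, p ∈ T ↔ (u p).coeff g ≠ 0 := fun p => by
    rw [hT, Set.Finite.mem_toFinset]; rfl
  have hR : u.hsum.coeff g = ∑ p ∈ T, (u p).coeff g :=
    SummableFamily.coeff_hsum_eq_sum_of_subset fun p hp => (hTmem p).mpr hp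
  set K : Finset ℕ := T.image fun p => p.1 + p.2 with hK
  have hL : (groupFam u).hsum.coeff g = ∑ k ∈ K, (groupFam u k).coeff g := by
    apply SummableFamily.coeff_hsum_eq_sum_of_subset
    intro k hk
    have hk' : (∑ p ∈ Finset.HasAntidiagonal.antidiagonal k, u p).coeff g ≠ 0 := hk
    rw [coeff_sum] at hk'
    obtain ⟨p, hpmem, hp⟩ := Finset.exists_ne_zero_of_sum_ne_zero hk'
    exact Finset.mem_image.mpr ⟨p, (hTmem p).mpr hp, Finset.HasAntidiagonal.mem_antidiagonal.mp hpmem⟩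
  have hdisj : (K : Set ℕ).PairwiseDisjoint fun k => Finset.HasAntidiagonal.antidiagonal k := by
    intro a _ b _ hab
    refine Finset.disjoint_left.mpr fun p hpa hpb => hab ?_
    rw [← Finset.HasAntidiagonal.mem_antidiagonal.mp hpa, ← Finset.HasAntidiagonal.mem_antidiagonal.mp hpb]
  rw [hL, hR]
  calc ∑ k ∈ K, (groupFam u k).coeff g
      = ∑ k ∈ K, ∑ p ∈ Finset.HasAntidiagonal.antidiagonal k, (u p).coeff g :=
        Finset.sum_congr rfl fun k _ => by rw [groupFam_apply, coeff_sum]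
    _ = ∑ p ∈ K.biUnion Finset.HasAntidiagonal.antidiagonal, (u p).coeff g :=
        (Finset.sum_biUnion hdisj).symm
    _ = ∑ p ∈ T, (u p).coeff g := by
        refine (Finset.sum_subset ?_ ?_).symm
        · intro p hp
          exact Finset.mem_biUnion.mpr ⟨p.1 + p.2,
            Finset.mem_image.mpr ⟨p, hp, rfl⟩, Finset.HasAntidiagonal.mem_antidiagonal.mpr rfl⟩
        · intro p _ hpT
          by_contra hne
          exact hpT ((hTmem p).mpr hne)

lemma famSMul_apply (s t : SummableFamily ℝ ℂ ℕ) (p : ℕ × ℕ) :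
    (SummableFamily.mul s t) p = s p.1 * t p.2 := by
  rfl

lemma hsum_famSMul (s t : SummableFamily ℝ ℂ ℕ) :
    (SummableFamily.mul s t).hsum = s.hsum * t.hsum := by
  rw [SummableFamily.hsum_mul]

lemma factorial_identity {i j : ℕ} :
    ((i + j).factorial : ℂ)⁻¹ * ((i + j).choose i : ℂ) =
      (i.factorial : ℂ)⁻¹ * (j.factorial : ℂ)⁻¹ := by
  have h : ((i + j).choose i : ℂ) = ((i+j).factorial : ℂ) / ((i.factorial : ℂ) * ((i+j-i).factorial : ℂ)) :=
    Nat.cast_choose ℂ (Nat.le_add_right i j)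
  rw [h, Nat.add_sub_cancel_left]
  have h1 : ((i+j).factorial : ℂ) ≠ 0 := Nat.cast_ne_zero.mpr (Nat.factorial_ne_zero _)
  have h2 : (i.factorial : ℂ) ≠ 0 := Nat.cast_ne_zero.mpr (Nat.factorial_ne_zero _)
  have h3 : (j.factorial : ℂ) ≠ 0 := Nat.cast_ne_zero.mpr (Nat.factorial_ne_zero _)
  field_simp

lemma exp_add {a b : Λ} (ha : 0 < a.orderTop) (hb : 0 < b.orderTop) :
    Exp (a + b) = Exp a * Exp b := by
  have hab : 0 < (a + b).orderTop :=
    lt_of_lt_of_le (lt_min ha hb) min_orderTop_le_orderTop_add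
  rw [exp_eq a ha, exp_eq b hb, exp_eq _ hab, ← hsum_famSMul, ← hsum_groupFam]
  congr 1
  refine SummableFamily.ext fun k => ?_
  rw [expFam_apply, groupFam_apply]
  have hpow : (a + b) ^ k =
      ∑ m ∈ Finset.HasAntidiagonal.antidiagonal k, k.choose m.1 • (a ^ m.1 * b ^ m.2) :=
    Commute.add_pow' (Commute.all a b) k
  have hcast : ∀ n : ℕ, (((n.factorial : ℚ)⁻¹ : ℚ) : ℂ) = ((n.factorial : ℂ))⁻¹ := by
    intro n; push_cast; ring
  rw [qsmul_eq_C_mul, hcast, hpow, Finset.mul_sum]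
  refine Finset.sum_congr rfl fun p hp => ?_
  have hk : p.1 + p.2 = k := Finset.HasAntidiagonal.mem_antidiagonal.mp hp
  rw [famSMul_apply, expFam_apply, expFam_apply, nsmul_eq_C_mul,
    qsmul_eq_C_mul, qsmul_eq_C_mul, hcast, hcast]
  rw [← mul_assoc, ← map_mul]
  rw [show (C ((p.1.factorial : ℂ))⁻¹ * a ^ p.1) * (C ((p.2.factorial : ℂ))⁻¹ * b ^ p.2)
      = C (((p.1.factorial : ℂ))⁻¹ * ((p.2.factorial : ℂ))⁻¹) * (a ^ p.1 * b ^ p.2) by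
    rw [map_mul]; ring]
  subst hk
  rw [factorial_identity]

/-! ### The fundamental estimates -/

lemma exp_sub_one_sub_self {x : Λ} (hx : 0 < x.orderTop) :
    x.orderTop + x.orderTop ≤ (Exp x - 1 - x).orderTop := by
  have h1 : (SummableFamily.ofFinsupp (Finsupp.single (0:ℕ) (1:Λ))).hsum = 1 := by
    rw [SummableFamily.hsum_ofFinsupp, Finsupp.sum_single_index rfl]; rfl
  have h2 : (SummableFamily.ofFinsupp (Finsupp.single (1:ℕ) x)).hsum = x := by
    rw [SummableFamily.hsum_ofFinsupp, Finsupp.sum_single_index rfl]; rfl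
  have hmain : Exp x - 1 - x = (expFam x hx - SummableFamily.ofFinsupp (Finsupp.single 0 1)
      - SummableFamily.ofFinsupp (Finsupp.single 1 x)).hsum := by
    rw [SummableFamily.hsum_sub, SummableFamily.hsum_sub, h1, h2, exp_eq x hx]
  rw [hmain]
  refine le_orderTop_hsum _ fun k => ?_
  rw [SummableFamily.sub_apply, SummableFamily.sub_apply]
  match k with
  | 0 =>
      have : expFam x hx 0 - (SummableFamily.ofFinsupp (Finsupp.single 0 1)) 0
          - (SummableFamily.ofFinsupp (Finsupp.single 1 x)) 0 = 0 := by
        simp [SummableFamily.coe_ofFinsupp, Finsupp.single_apply]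
      rw [this, orderTop_zero]; exact le_top
  | 1 =>
      have : expFam x hx 1 - (SummableFamily.ofFinsupp (Finsupp.single 0 1)) 1
          - (SummableFamily.ofFinsupp (Finsupp.single 1 x)) 1 = 0 := by
        simp [SummableFamily.coe_ofFinsupp, Finsupp.single_apply]
      rw [this, orderTop_zero]; exact le_top
  | (k+2) =>
      have : expFam x hx (k+2) - (SummableFamily.ofFinsupp (Finsupp.single 0 1)) (k+2)
          - (SummableFamily.ofFinsupp (Finsupp.single 1 x)) (k+2)
          = (((k+2).factorial : ℚ)⁻¹) • x ^ (k+2) := by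
        simp [SummableFamily.coe_ofFinsupp, Finsupp.single_apply]
      rw [this]
      exact le_trans (orderTop_pow_ge hx k) (orderTop_le_qsmul _ _)

lemma coe_lt_coe_add_self {o : ℝ} (ho : 0 < o) :
    (o : WithTop ℝ) < (o : WithTop ℝ) + (o : WithTop ℝ) := by
  rw [← WithTop.coe_add, WithTop.coe_lt_coe]
  linarith

lemma exp_sub_one_orderTop {x : Λ} (hx : 0 < x.orderTop) :
    (Exp x - 1).orderTop = x.orderTop := by
  by_cases hx0 : x = 0
  · subst hx0; rw [exp_zero]; simp
  · obtain ⟨o, ho⟩ : ∃ o : ℝ, x.orderTop = (o : WithTop ℝ) := ⟨x.order, (HahnSeries.order_eq_orderTop_of_ne_zero hx0).symm⟩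
    have hopos : 0 < o := by
      rw [ho] at hx; exact_mod_cast hx
    have hlt : x.orderTop < (Exp x - 1 - x).orderTop := by
      refine lt_of_lt_of_le ?_ (exp_sub_one_sub_self hx)
      rw [ho]; exact coe_lt_coe_add_self hopos
    have heq : Exp x - 1 = x + (Exp x - 1 - x) := by ring
    rw [heq, orderTop_add_eq_left hlt]

lemma exp_orderTop {x : Λ} (hx : 0 < x.orderTop) : (Exp x).orderTop = 0 := by
  have heq : Exp x = 1 + (Exp x - 1) := by ring
  have h1 : (1 : Λ).orderTop < (Exp x - 1).orderTop := by
    rw [orderTop_one, exp_sub_one_orderTop hx]; exact hx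
  rw [heq, orderTop_add_eq_left h1, orderTop_one]

lemma exp_ne_zero {x : Λ} (hx : 0 < x.orderTop) : Exp x ≠ 0 := by
  intro h
  have := exp_orderTop hx
  rw [h, orderTop_zero] at this
  exact (WithTop.top_ne_zero) this

lemma one_add_orderTop {y : Λ} (hy : 0 < (y - 1).orderTop) : y.orderTop = 0 := by
  have heq : y = 1 + (y - 1) := by ring
  have h1 : (1 : Λ).orderTop < (y - 1).orderTop := by rw [orderTop_one]; exact hy
  rw [heq, orderTop_add_eq_left h1, orderTop_one]

lemma exp_inj {a b : Λ} (ha : 0 < a.orderTop) (hb : 0 < b.orderTop)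
    (h : Exp a = Exp b) : a = b := by
  have hab : 0 < (a - b).orderTop := by
    have : a - b = a + (-b) := by ring
    rw [this]
    refine lt_of_lt_of_le (lt_min ha ?_) min_orderTop_le_orderTop_add
    rw [orderTop_neg]; exact hb
  have h1 : Exp (a - b) * Exp b = Exp b := by
    rw [← exp_add hab hb, sub_add_cancel, h]
  have h2 : Exp (a - b) = 1 := by
    have := mul_right_cancel₀ (exp_ne_zero hb) (h1.trans (one_mul (Exp b)).symm)
    exact this
  have h3 := exp_sub_one_orderTop hab
  rw [h2, sub_self, orderTop_zero] at h3
  have h4 : a - b = 0 := orderTop_eq_top.mp h3.symm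
  exact sub_eq_zero.mp h4

/-! ### Newton iteration for surjectivity -/

noncomputable def newt (y : Λ) : ℕ → Λ
  | 0 => 0
  | n+1 => newt y n + (y * Exp (-(newt y n)) - 1)

noncomputable def derr (y : Λ) (n : ℕ) : Λ := y * Exp (-(newt y n)) - 1

lemma derr_def (y : Λ) (n : ℕ) : derr y n = y * Exp (-(newt y n)) - 1 := rfl

lemma newt_zero (y : Λ) : newt y 0 = 0 := rfl

lemma newt_succ (y : Λ) (n : ℕ) : newt y (n+1) = newt y n + derr y n := rfl

lemma two_pow_mono {N n : ℕ} (h : N ≤ n) : (2:ℝ)^N ≤ (2:ℝ)^n := by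
  exact_mod_cast Nat.pow_le_pow_right (by norm_num) h

lemma newt_invariant {y : Λ} {c : ℝ} (hc : 0 < c) (hy : (c : WithTop ℝ) ≤ (y - 1).orderTop) :
    ∀ n, 0 < (newt y n).orderTop ∧ (((2:ℝ)^n * c : ℝ) : WithTop ℝ) ≤ (derr y n).orderTop
  | 0 => by
      constructor
      · rw [newt_zero, orderTop_zero]; exact WithTop.coe_lt_top 0
      · have h : derr y 0 = y - 1 := by
          rw [derr_def, newt_zero, neg_zero, exp_zero, mul_one]
        rw [h]
        simpa using hy
  | (n+1) => by
      obtain ⟨hx, he'⟩ := newt_invariant hc hy n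
      set x := newt y n with hxdef
      set e := derr y n with hedef
      have hpos : (0 : WithTop ℝ) < (((2:ℝ)^n * c : ℝ) : WithTop ℝ) := by
        exact_mod_cast (by positivity : (0:ℝ) < 2^n * c)
      have he : 0 < e.orderTop := lt_of_lt_of_le hpos he'
      have hne : 0 < (-e).orderTop := by rw [orderTop_neg]; exact he
      have hnx : 0 < (-x).orderTop := by rw [orderTop_neg]; exact hx
      have hxe : 0 < (newt y (n+1)).orderTop := by
        rw [newt_succ]
        exact lt_of_lt_of_le (lt_min hx he) min_orderTop_le_orderTop_add
      refine ⟨hxe, ?_⟩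
      have hsplit : derr y (n+1) = (Exp (-e) - 1 - (-e)) + e * (Exp (-e) - 1) := by
        have h1 : Exp (-(newt y (n+1))) = Exp (-x) * Exp (-e) := by
          rw [← exp_add hnx hne]
          congr 1
          rw [newt_succ]; ring
        have h2 : y * Exp (-x) = 1 + e := by rw [hedef, derr_def]; ring
        rw [derr_def, h1, show y * (Exp (-x) * Exp (-e)) = (y * Exp (-x)) * Exp (-e) by ring, h2]
        ring
      have hcoe : (((2:ℝ)^(n+1) * c : ℝ) : WithTop ℝ)
          = (((2:ℝ)^n * c : ℝ) : WithTop ℝ) + (((2:ℝ)^n * c : ℝ) : WithTop ℝ) := by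
        rw [← WithTop.coe_add, WithTop.coe_eq_coe]
        ring
      have hA : (((2:ℝ)^(n+1) * c : ℝ) : WithTop ℝ) ≤ (Exp (-e) - 1 - (-e)).orderTop := by
        rw [hcoe]
        refine le_trans (add_le_add (le_trans he' ?_) (le_trans he' ?_)) (exp_sub_one_sub_self hne)
        all_goals rw [orderTop_neg]
      have hB : (((2:ℝ)^(n+1) * c : ℝ) : WithTop ℝ) ≤ (e * (Exp (-e) - 1)).orderTop := by
        rw [hcoe]
        refine orderTop_mul_ge he' ?_
        rw [exp_sub_one_orderTop hne, orderTop_neg]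
        exact he'
      rw [hsplit]
      exact le_trans (le_min hA hB) min_orderTop_le_orderTop_add

noncomputable def newtFam (y : Λ) {c : ℝ} (hc : 0 < c)
    (hy : (c : WithTop ℝ) ≤ (y - 1).orderTop) : SummableFamily ℝ ℂ ℕ where
  toFun n := derr y n
  isPWO_iUnion_support' := by
    have hb : ∀ n, ∀ g ∈ (derr y n).support, (2:ℝ)^n * c ≤ g := by
      intro n g hg
      have h1 := orderTop_le_of_coeff_ne_zero ((mem_support _ _).mp hg)
      exact_mod_cast le_trans (newt_invariant hc hy n).2 h1
    have hU : ∀ N : ℕ, (⋃ n ∈ Finset.range N, (derr y n).support).IsPWO := by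
      intro N
      induction N with
      | zero => simp
      | succ N ih =>
          rw [Finset.range_add_one, Finset.set_biUnion_insert]
          exact ((derr y N).isPWO_support).union ih
    rw [Set.isPWO_iff_isWF, Set.isWF_iff_no_descending_seq]
    intro f hf hmem
    obtain ⟨N, hN⟩ := pow_unbounded_of_one_lt (f 0 / c) (one_lt_two (α := ℝ))
    have hN' : f 0 < 2^N * c := by
      rw [div_lt_iff₀ hc] at hN; linarith
    have hmem' : ∀ n, f n ∈ ⋃ m ∈ Finset.range N, (derr y m).support := by
      intro n
      have h0 := hmem n
      rw [Set.mem_iUnion] at h0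
      obtain ⟨m, hm⟩ := h0
      have hmN : m < N := by
        by_contra hge
        push_neg at hge
        have h1 : (2:ℝ)^N * c ≤ (2:ℝ)^m * c := by
          have := two_pow_mono hge
          nlinarith
        have h2 : (2:ℝ)^m * c ≤ f n := hb m _ hm
        have h3 : f n ≤ f 0 := hf.antitone (Nat.zero_le n)
        linarith
      exact Set.mem_biUnion (Finset.mem_range.mpr hmN) hm
    exact (Set.isWF_iff_no_descending_seq.mp (hU N).isWF) f hf hmem'
  finite_co_support' g := by
    refine ((Finset.range (⌊g / c⌋₊ + 1)).finite_toSet).subset ?_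
    intro n hn
    have hn' : (derr y n).coeff g ≠ 0 := hn
    have h1 : (derr y n).orderTop ≤ (g : WithTop ℝ) := orderTop_le_of_coeff_ne_zero hn'
    have h2 : (2:ℝ)^n * c ≤ g := by
      exact_mod_cast le_trans (newt_invariant hc hy n).2 h1
    have h3 : (n : ℝ) < (2:ℝ)^n := by exact_mod_cast Nat.lt_two_pow_self
    have h4 : (n : ℝ) ≤ g / c := by
      rw [le_div_iff₀ hc]; nlinarith
    exact Finset.mem_coe.mpr (Finset.mem_range.mpr (Nat.lt_succ_of_le (Nat.le_floor h4)))

lemma newt_eq_sum (y : Λ) : ∀ N, newt y N = ∑ n ∈ Finset.range N, derr y n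
  | 0 => by rw [newt_zero, Finset.range_zero, Finset.sum_empty]
  | (N+1) => by rw [Finset.sum_range_succ, ← newt_eq_sum y N, newt_succ]

lemma exp_surj {y : Λ} (hy : 0 < (y - 1).orderTop) :
    ∃ x : Λ, 0 < x.orderTop ∧ Exp x = y := by
  by_cases hy1 : y = 1
  · refine ⟨0, ?_, by rw [exp_zero, hy1]⟩
    rw [orderTop_zero]; exact WithTop.coe_lt_top 0
  · have hne : y - 1 ≠ 0 := sub_ne_zero.mpr hy1
    obtain ⟨c, hceq⟩ : ∃ c : ℝ, (y - 1).orderTop = (c : WithTop ℝ) :=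
      ⟨(y - 1).order, (order_eq_orderTop_of_ne_zero hne).symm⟩
    have hc : 0 < c := by
      rw [hceq] at hy; exact_mod_cast hy
    have hyc : (c : WithTop ℝ) ≤ (y - 1).orderTop := hceq.ge
    set s := newtFam y hc hyc with hsdef
    set x := s.hsum with hxdef
    have hsapp : ∀ n, s n = derr y n := fun n => rfl
    have hinv := newt_invariant hc hyc
    have hcle : ∀ n : ℕ, (c : WithTop ℝ) ≤ (((2:ℝ)^n * c : ℝ) : WithTop ℝ) := by
      intro n
      rw [WithTop.coe_le_coe]
      have h1 : (1:ℝ) ≤ 2^n := by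
        have := two_pow_mono (Nat.zero_le n)
        simpa using this
      nlinarith
    have hxpos : 0 < x.orderTop := by
      refine lt_of_lt_of_le ?_ (le_orderTop_hsum s fun n => le_trans (hcle n) ?_)
      · exact_mod_cast hc
      · rw [hsapp]; exact (hinv n).2
    have hnx : 0 < (-x).orderTop := by rw [orderTop_neg]; exact hxpos
    have htail : ∀ N : ℕ, (((2:ℝ)^N * c : ℝ) : WithTop ℝ) ≤ (x - newt y N).orderTop := by
      intro N
      set f : ℕ →₀ Λ := Finsupp.onFinset (Finset.range N)
        (fun n => if n < N then derr y n else 0)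
        (fun n hn => by
          rw [Finset.mem_range]
          by_contra h
          exact hn (by simp only [if_neg h])) with hfdef
      have hfapp : ∀ n, f n = if n < N then derr y n else 0 := fun n => rfl
      have hfs : (SummableFamily.ofFinsupp f).hsum = newt y N := by
        rw [SummableFamily.hsum_ofFinsupp, newt_eq_sum]
        rw [hfdef, Finsupp.onFinset_sum _ (fun _ => rfl)]
        exact Finset.sum_congr rfl fun n hn => by
          rw [if_pos (Finset.mem_range.mp hn)]; rfl
      have hdiff : x - newt y N = (s - SummableFamily.ofFinsupp f).hsum := by
        rw [SummableFamily.hsum_sub, hfs]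
      rw [hdiff]
      refine le_orderTop_hsum _ fun n => ?_
      rw [SummableFamily.sub_apply]
      have hofapp : (SummableFamily.ofFinsupp f) n = f n := by
        rw [SummableFamily.coe_ofFinsupp]
      rw [hofapp, hfapp, hsapp]
      by_cases hnN : n < N
      · rw [if_pos hnN, sub_self, orderTop_zero]; exact le_top
      · rw [if_neg hnN, sub_zero]
        refine le_trans ?_ (hinv n).2
        rw [WithTop.coe_le_coe]
        have := two_pow_mono (not_lt.mp hnN)
        nlinarith
    have hfin : y * Exp (-x) - 1 = 0 := by
      rw [← orderTop_eq_top]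
      by_contra hT
      obtain ⟨t, ht⟩ := WithTop.ne_top_iff_exists.mp hT
      obtain ⟨N, hN⟩ := pow_unbounded_of_one_lt (t / c) (one_lt_two (α := ℝ))
      have htN : t < 2^N * c := by
        rw [div_lt_iff₀ hc] at hN; linarith
      have hposN : (0 : WithTop ℝ) < (((2:ℝ)^N * c : ℝ) : WithTop ℝ) := by
        exact_mod_cast (by positivity : (0:ℝ) < 2^N * c)
      have hxN : 0 < (x - newt y N).orderTop := lt_of_lt_of_le hposN (htail N)
      have hkey : Exp (-x) * Exp (x - newt y N) = Exp (-(newt y N)) := by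
        rw [← exp_add hnx hxN]
        congr 1
        ring
      have hsplit : y * Exp (-x) - 1
          = derr y N + (-(y * (Exp (-x) * (Exp (x - newt y N) - 1)))) := by
        rw [derr_def, ← hkey]
        ring
      have hy0 : y.orderTop = 0 := one_add_orderTop hy
      have hx0 : (Exp (-x)).orderTop = 0 := exp_orderTop hnx
      have hB : (((2:ℝ)^N * c : ℝ) : WithTop ℝ)
          ≤ (-(y * (Exp (-x) * (Exp (x - newt y N) - 1)))).orderTop := by
        rw [orderTop_neg]
        have h1 : (((2:ℝ)^N * c : ℝ) : WithTop ℝ) ≤ (Exp (x - newt y N) - 1).orderTop := by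
          rw [exp_sub_one_orderTop hxN]; exact htail N
        have h2 := orderTop_mul_ge (le_of_eq hx0.symm) h1
        rw [zero_add] at h2
        have h3 := orderTop_mul_ge (le_of_eq hy0.symm) h2
        rw [zero_add] at h3
        exact h3
      have hA : (((2:ℝ)^N * c : ℝ) : WithTop ℝ) ≤ (derr y N).orderTop := (hinv N).2
      have hle : (((2:ℝ)^N * c : ℝ) : WithTop ℝ) ≤ (y * Exp (-x) - 1).orderTop := by
        rw [hsplit]
        exact le_trans (le_min hA hB) min_orderTop_le_orderTop_add
      rw [← ht, WithTop.coe_le_coe] at hle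
      linarith
    have hyx : y * Exp (-x) = 1 := sub_eq_zero.mp hfin
    have hmul : Exp (-x) * Exp x = 1 := by
      rw [← exp_add hnx hxpos, neg_add_cancel, exp_zero]
    refine ⟨x, hxpos, ?_⟩
    calc Exp x = 1 * Exp x := (one_mul _).symm
      _ = (y * Exp (-x)) * Exp x := by rw [hyx]
      _ = y * (Exp (-x) * Exp x) := by ring
      _ = y := by rw [hmul, mul_one]

end ExpAux

/-- Exponential bijection from `Λ₊` onto `1 + Λ₊`: for `v x > 0` the family
`k ↦ (k!)⁻¹ • x^k` is summable, `v (exp x − 1) > 0`, and `exp` is a bijection from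
`{x | v x > 0}` onto `{y | v (y − 1) > 0}`. -/
theorem exp_bijection :
    (∀ x : Λ, 0 < v x → ∃ s : HahnSeries.SummableFamily ℝ ℂ ℕ,
      ∀ k : ℕ, s k = ((k.factorial : ℚ)⁻¹) • x ^ k) ∧
    (∀ x : Λ, 0 < v x → 0 < v (Exp x - 1)) ∧
    Set.BijOn Exp {x : Λ | 0 < v x} {y : Λ | 0 < v (y - 1)} := by
  have hv : ∀ x : Λ, v x = x.orderTop := fun x => HahnSeries.addVal_apply
  refine ⟨fun x hx => ExpAux.exp_summable x (by rw [← hv]; exact hx),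
    fun x hx => ?_, ?_, ?_, ?_⟩
  · rw [hv] at hx ⊢
    rw [ExpAux.exp_sub_one_orderTop hx]
    exact hx
  · intro x hx
    have hx' : 0 < x.orderTop := by rw [← hv]; exact hx
    show 0 < v (Exp x - 1)
    rw [hv, ExpAux.exp_sub_one_orderTop hx']
    exact hx'
  · intro a ha b hb h
    exact ExpAux.exp_inj (by rw [← hv]; exact ha) (by rw [← hv]; exact hb) h
  · intro y hy
    have hy' : 0 < (y - 1).orderTop := by rw [← hv]; exact hy
    obtain ⟨x, hx, hxy⟩ := ExpAux.exp_surj hy'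
    exact ⟨x, by rw [Set.mem_setOf_eq, hv]; exact hx, hxy⟩
end

section
/- Strictly convergent series are closed under convolution (well-definedness of the ring structure on the algebra Λ⟨H₁(L); Δ⟩ of strictly convergent formal power series of §3.1): let m ∈ ℕ, γ : Fin m → ℝ, and let f, g : (Fin m → ℤ) → Λ both be strictly convergent relative to γ. Then (i) for every α : Fin m → ℤ the family ν ↦ f ν · g (α − ν) is a summable family, and (ii) the function h : (Fin m → ℤ) → Λ defined by h α = Σ_ν f ν · g(α − ν) is again strictly convergent relative to γ. -/
/-- `f : (Fin m → ℤ) → Λ` is strictly convergent relative to `γ : Fin m → ℝ` if for every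
`r ∈ ℝ` the set `{ν | f ν ≠ 0 ∧ v (f ν) + ⟨ν, γ⟩ ≤ r}` is finite. -/
def StrictConv (m : ℕ) (γ : Fin m → ℝ) (f : (Fin m → ℤ) → Λ) : Prop :=
  ∀ r : ℝ, {ν : Fin m → ℤ | f ν ≠ 0 ∧
    v (f ν) + ((∑ i, (ν i : ℝ) * γ i : ℝ) : WithTop ℝ) ≤ (r : WithTop ℝ)}.Finite

/-- Reformulation of strict convergence with real-valued `order`. -/
lemma strictConv_iff_real (m : ℕ) (γ : Fin m → ℝ) (f : (Fin m → ℤ) → Λ) :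
    StrictConv m γ f ↔ ∀ r : ℝ, {ν : Fin m → ℤ | f ν ≠ 0 ∧
      (f ν).order + (∑ i, (ν i : ℝ) * γ i) ≤ r}.Finite := by
  have key : ∀ (ν : Fin m → ℤ) (r : ℝ), f ν ≠ 0 →
      (v (f ν) + ((∑ i, (ν i : ℝ) * γ i : ℝ) : WithTop ℝ) ≤ (r : WithTop ℝ) ↔
        (f ν).order + (∑ i, (ν i : ℝ) * γ i) ≤ r) := by
    intro ν r h1
    rw [v, HahnSeries.addVal_apply_of_ne h1, ← WithTop.coe_add, WithTop.coe_le_coe]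
  constructor <;> intro H r <;> refine (H r).subset fun ν hν => ?_
  · exact ⟨hν.1, (key ν r hν.1).mpr hν.2⟩
  · exact ⟨hν.1, (key ν r hν.1).mp hν.2⟩

lemma isPWO_biUnion {ι : Type*} {s : Set ι} (hs : s.Finite) {F : ι → Set ℝ}
    (hF : ∀ i ∈ s, (F i).IsPWO) : (⋃ i ∈ s, F i).IsPWO := by
  revert hF
  refine Set.Finite.induction_on s hs (fun _ => by simp [Set.isPWO_empty]) ?_
  intro a t _ _ ih hF
  rw [Set.biUnion_insert]
  exact (hF _ (Set.mem_insert _ _)).union (ih fun i hi => hF i (Set.mem_insert_of_mem _ hi))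

lemma strictConv_bound (m : ℕ) (γ : Fin m → ℝ) (f : (Fin m → ℤ) → Λ)
    (hf : StrictConv m γ f) :
    ∃ B : ℝ, ∀ ν, f ν ≠ 0 → B ≤ (f ν).order + ∑ i, (ν i : ℝ) * γ i := by
  classical
  have hf' := (strictConv_iff_real m γ f).mp hf
  set w : (Fin m → ℤ) → ℝ := fun ν => (f ν).order + ∑ i, (ν i : ℝ) * γ i with hw
  set s : Finset ℝ := insert 0 ((hf' 0).toFinset.image w) with hs
  refine ⟨s.min' ⟨0, Finset.mem_insert_self _ _⟩, fun ν hν => ?_⟩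
  by_cases hle : w ν ≤ 0
  · exact Finset.min'_le _ _ (Finset.mem_insert_of_mem
      (Finset.mem_image_of_mem w ((hf' 0).mem_toFinset.mpr ⟨hν, hle⟩)))
  · exact le_trans (Finset.min'_le _ _ (Finset.mem_insert_self _ _)) (le_of_not_ge hle)

/-- Strictly convergent series are closed under convolution: (i) for each `α` the family
`ν ↦ f ν · g (α − ν)` is summable; (ii) the convolution `h α = Σ_ν f ν · g (α − ν)` is
again strictly convergent relative to `γ`. -/
theorem convolution_strictly_convergent (m : ℕ) (γ : Fin m → ℝ)
    (f g : (Fin m → ℤ) → Λ) (hf : StrictConv m γ f) (hg : StrictConv m γ g) :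
    (∀ α : Fin m → ℤ, ∃ s : HahnSeries.SummableFamily ℝ ℂ (Fin m → ℤ),
      ∀ ν, s ν = f ν * g (α - ν)) ∧
    (∀ h : (Fin m → ℤ) → Λ,
      (∀ α : Fin m → ℤ, ∃ s : HahnSeries.SummableFamily ℝ ℂ (Fin m → ℤ),
        (∀ ν, s ν = f ν * g (α - ν)) ∧ s.hsum = h α) →
      StrictConv m γ h) := by
  classical
  obtain ⟨Bf, hBf⟩ := strictConv_bound m γ f hf
  obtain ⟨Bg, hBg⟩ := strictConv_bound m γ g hg
  have hf' := (strictConv_iff_real m γ f).mp hf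
  have hg' := (strictConv_iff_real m γ g).mp hg
  have csum : ∀ α ν : Fin m → ℤ,
      (∑ i, (ν i : ℝ) * γ i) + (∑ i, ((α - ν) i : ℝ) * γ i) = ∑ i, (α i : ℝ) * γ i := by
    intro α ν
    rw [← Finset.sum_add_distrib]
    refine Finset.sum_congr rfl fun i _ => ?_
    have : ((α - ν) i : ℝ) = (α i : ℝ) - (ν i : ℝ) := by push_cast [Pi.sub_apply]; ring
    rw [this]; ring
  have finS : ∀ (α : Fin m → ℤ) (r : ℝ),
      {ν : Fin m → ℤ | f ν ≠ 0 ∧ g (α - ν) ≠ 0 ∧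
        (f ν).order + (g (α - ν)).order ≤ r}.Finite := by
    intro α r
    refine (hf' (r + (∑ i, (α i : ℝ) * γ i) - Bg)).subset ?_
    rintro ν ⟨h1, h2, h3⟩
    have hb := hBg (α - ν) h2
    have hc := csum α ν
    exact ⟨h1, by linarith⟩
  have key : ∀ α : Fin m → ℤ, ∃ s : HahnSeries.SummableFamily ℝ ℂ (Fin m → ℤ),
      ∀ ν, s ν = f ν * g (α - ν) := by
    intro α
    have cosupp : ∀ x : ℝ, {ν : Fin m → ℤ | (f ν * g (α - ν)).coeff x ≠ 0}.Finite := by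
      intro x
      refine (finS α x).subset fun ν hx => ?_
      have hne : f ν * g (α - ν) ≠ 0 := HahnSeries.ne_zero_of_coeff_ne_zero hx
      have hfν : f ν ≠ 0 := fun h0 => hne (by simp [h0])
      have hgν : g (α - ν) ≠ 0 := fun h0 => hne (by simp [h0])
      have hord : (f ν * g (α - ν)).order ≤ x := HahnSeries.order_le_of_coeff_ne_zero hx
      rw [HahnSeries.order_mul hfν hgν] at hord
      exact ⟨hfν, hgν, hord⟩
    have hpwo : (⋃ ν : Fin m → ℤ, (f ν * g (α - ν)).support).IsPWO := by
      rw [Set.isPWO_iff_isWF, Set.isWF_iff_no_descending_seq]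
      intro u hu hmem
      have hsub : (⋃ ν : Fin m → ℤ, (f ν * g (α - ν)).support) ∩ Set.Iic (u 0) ⊆
          ⋃ ν ∈ {ν : Fin m → ℤ | f ν ≠ 0 ∧ g (α - ν) ≠ 0 ∧
            (f ν).order + (g (α - ν)).order ≤ u 0}, (f ν * g (α - ν)).support := by
        rintro x ⟨hx, hxle⟩
        obtain ⟨_, ⟨ν, rfl⟩, hxs⟩ := hx
        have hne : f ν * g (α - ν) ≠ 0 := HahnSeries.ne_zero_of_coeff_ne_zero hxs
        have hfν : f ν ≠ 0 := fun h0 => hne (by simp [h0])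
        have hgν : g (α - ν) ≠ 0 := fun h0 => hne (by simp [h0])
        have hord : (f ν * g (α - ν)).order ≤ x := HahnSeries.order_le_of_coeff_ne_zero hxs
        rw [HahnSeries.order_mul hfν hgν] at hord
        exact Set.mem_biUnion ⟨hfν, hgν, le_trans hord hxle⟩ hxs
      have hWF : ((⋃ ν : Fin m → ℤ, (f ν * g (α - ν)).support) ∩ Set.Iic (u 0)).IsWF := by
        rw [← Set.isPWO_iff_isWF]
        exact ((isPWO_biUnion (finS α (u 0))
          (fun ν _ => (f ν * g (α - ν)).isPWO_support)).mono hsub)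
      exact Set.isWF_iff_no_descending_seq.mp hWF u hu
        (fun n => ⟨hmem n, hu.antitone (Nat.zero_le n)⟩)
    exact ⟨⟨fun ν => f ν * g (α - ν), hpwo, cosupp⟩, fun ν => rfl⟩
  refine ⟨key, ?_⟩
  intro h hrep
  rw [strictConv_iff_real]
  intro r
  refine (Set.Finite.image2 (· + ·) (hf' (r - Bg)) (hg' (r - Bf))).subset ?_
  rintro α ⟨hα, hord⟩
  obtain ⟨s, hs, hsum⟩ := hrep α
  have horder : (h α).order ∈ (h α).support := mt HahnSeries.coeff_order_eq_zero.mp hα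
  rw [← hsum] at horder
  obtain ⟨_, ⟨ν, rfl⟩, hmem⟩ := HahnSeries.SummableFamily.support_hsum_subset horder
  have hmem' : (h α).order ∈ (f ν * g (α - ν)).support := by
    rw [← hs ν, ← hsum]; exact hmem
  clear hmem
  have hne : f ν * g (α - ν) ≠ 0 := HahnSeries.ne_zero_of_coeff_ne_zero hmem'
  have hfν : f ν ≠ 0 := fun h0 => hne (by simp [h0])
  have hgν : g (α - ν) ≠ 0 := fun h0 => hne (by simp [h0])
  have hord2 : (f ν).order + (g (α - ν)).order ≤ (h α).order := by
    rw [← HahnSeries.order_mul hfν hgν]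
    exact HahnSeries.order_le_of_coeff_ne_zero hmem'
  have hb1 := hBf ν hfν
  have hb2 := hBg (α - ν) hgν
  have hc := csum α ν
  exact (show ν + (α - ν) = α by ring) ▸ Set.mem_image2_of_mem
    ⟨hfν, by linarith⟩ ⟨hgν, by linarith⟩
end

section
/- Reduction to the residue field commutes with evaluation (the key step in the paper's proof of the Proposition of §1.2.3): let m ∈ ℕ and let f : (Fin m → ℤ) → Λ be strictly convergent relative to 0 with v(f ν) ≥ 0 for all ν, and let y : Fin m → Λ with v(y i) = 0 for all i. Let F = Σ_ν f ν · ∏_i (y i)^(ν i) be the evaluation, i.e. the sum of the corresponding summable family. Then v(F) ≥ 0, the set {ν | (f ν).coeff 0 ≠ 0} is finite, and F.coeff 0 equals the finite sum Σ_ν (f ν).coeff 0 · ∏_i ((y i).coeff 0)^(ν i), where the powers on the right are integer powers in ℂ of the nonzero complex numbers (y i).coeff 0. -/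
lemma v_mul (a b : Λ) : v (a * b) = v a + v b :=
  (HahnSeries.addVal ℝ ℂ).map_mul a b

lemma v_one : v (1 : Λ) = 0 :=
  (HahnSeries.addVal ℝ ℂ).map_one

lemma coeff_neg_of_v_nonneg {x : Λ} (hx : 0 ≤ v x) {r : ℝ} (hr : r < 0) : x.coeff r = 0 := by
  apply HahnSeries.coeff_eq_zero_of_lt_orderTop
  rw [← HahnSeries.addVal_apply]
  refine lt_of_lt_of_le ?_ hx
  exact_mod_cast hr

lemma v_nonneg_of_coeff {x : Λ} (h : ∀ r : ℝ, r < 0 → x.coeff r = 0) : 0 ≤ v x := by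
  by_contra hc
  push_neg at hc
  have hx : x ≠ 0 := by
    intro h0
    rw [v, h0, (HahnSeries.addVal ℝ ℂ).map_zero] at hc
    exact (not_top_lt hc)
  rw [v, HahnSeries.addVal_apply_of_ne hx] at hc
  have ho : x.order < 0 := by exact_mod_cast hc
  exact hx (HahnSeries.coeff_order_eq_zero.mp (h _ ho))

lemma coeff0_mul {a b : Λ} (ha : 0 ≤ v a) (hb : 0 ≤ v b) :
    (a * b).coeff 0 = a.coeff 0 * b.coeff 0 := by
  rw [HahnSeries.coeff_mul]
  have hsub : Finset.antidiagonal a.isPWO_support b.isPWO_support 0 ⊆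
      {((0 : ℝ), (0 : ℝ))} := by
    intro ij hij
    rw [Finset.mem_antidiagonal] at hij
    obtain ⟨h1, h2, h3⟩ := hij
    have hi : 0 ≤ ij.1 := not_lt.mp fun hlt => h1 (coeff_neg_of_v_nonneg ha hlt)
    have hj : 0 ≤ ij.2 := not_lt.mp fun hlt => h2 (coeff_neg_of_v_nonneg hb hlt)
    have e1 : ij.1 = 0 := by linarith
    have e2 : ij.2 = 0 := by linarith
    simp [Finset.mem_singleton, Prod.ext_iff, e1, e2]
  rw [Finset.sum_subset hsub]
  · simp
  · intro x hx hnx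
    rw [Finset.mem_singleton] at hx
    subst hx
    simp only [Finset.mem_antidiagonal, HahnSeries.mem_support, add_zero, and_true,
      not_and_or, not_not] at hnx
    rcases hnx with h | h <;> simp [h]

lemma v_inv {x : Λ} (hx : v x = 0) : v x⁻¹ = 0 ∧ (x⁻¹).coeff 0 = (x.coeff 0)⁻¹ := by
  have hx0 : x ≠ 0 := by
    intro h0
    rw [v, h0, (HahnSeries.addVal ℝ ℂ).map_zero] at hx
    exact (by simp : (⊤ : WithTop ℝ) ≠ 0) hx
  have hmul : x * x⁻¹ = 1 := mul_inv_cancel₀ hx0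
  have hvinv : v x⁻¹ = 0 := by
    have := v_mul x x⁻¹
    rw [hmul, v_one, hx, zero_add] at this
    exact this.symm
  refine ⟨hvinv, ?_⟩
  have hco : x.coeff 0 * (x⁻¹).coeff 0 = 1 := by
    have := coeff0_mul (le_of_eq hx.symm) (le_of_eq hvinv.symm)
    rw [hmul] at this
    simpa using this.symm
  exact (inv_eq_of_mul_eq_one_right hco).symm

lemma v_pow {x : Λ} (hx : v x = 0) (n : ℕ) :
    v (x ^ n) = 0 ∧ (x ^ n).coeff 0 = (x.coeff 0) ^ n := by
  induction n with
  | zero => simp [v_one, HahnSeries.coeff_one]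
  | succ n ih =>
    constructor
    · rw [pow_succ, v_mul, ih.1, hx, add_zero]
    · rw [pow_succ, coeff0_mul (le_of_eq ih.1.symm) (le_of_eq hx.symm), ih.2, pow_succ]

lemma v_zpow {x : Λ} (hx : v x = 0) (n : ℤ) :
    v (x ^ n) = 0 ∧ (x ^ n).coeff 0 = (x.coeff 0) ^ n := by
  cases n with
  | ofNat k =>
    rw [Int.ofNat_eq_coe, zpow_natCast, zpow_natCast]
    exact v_pow hx k
  | negSucc k =>
    rw [zpow_negSucc, zpow_negSucc]
    have hp := v_pow hx (k + 1)
    have hi := v_inv hp.1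
    exact ⟨hi.1, by rw [hi.2, hp.2]⟩

lemma v_prod {ι : Type*} (t : Finset ι) (g : ι → Λ) (h : ∀ i ∈ t, v (g i) = 0) :
    v (∏ i ∈ t, g i) = 0 ∧ (∏ i ∈ t, g i).coeff 0 = ∏ i ∈ t, (g i).coeff 0 := by
  classical
  induction t using Finset.cons_induction with
  | empty => simp [v_one, HahnSeries.coeff_one]
  | cons a t ha ih =>
    have hih := ih fun i hi => h i (Finset.mem_cons_of_mem hi)
    have hva := h a (Finset.mem_cons_self a t)
    rw [Finset.prod_cons, Finset.prod_cons]
    constructor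
    · rw [v_mul, hva, hih.1, add_zero]
    · rw [coeff0_mul (le_of_eq hva.symm) (le_of_eq hih.1.symm), hih.2]

/-- Reduction to the residue field commutes with evaluation: if `f` is strictly convergent
relative to `0` with `v (f ν) ≥ 0` for all `ν`, and `v (y i) = 0` for all `i`, then the
evaluation `F = Σ_ν f ν · Π_i (y i)^(ν i)` satisfies `v F ≥ 0`, the set
`{ν | (f ν).coeff 0 ≠ 0}` is finite, and `F.coeff 0` equals the finite sum
`Σ_ν (f ν).coeff 0 · Π_i ((y i).coeff 0)^(ν i)` (integer powers in `ℂ`). -/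
theorem residue_commutes_with_evaluation (m : ℕ) (f : (Fin m → ℤ) → Λ)
    (hconv : ∀ r : ℝ, {ν : Fin m → ℤ | f ν ≠ 0 ∧ v (f ν) ≤ (r : WithTop ℝ)}.Finite)
    (hpos : ∀ ν, 0 ≤ v (f ν))
    (y : Fin m → Λ) (hy : ∀ i, v (y i) = 0)
    (s : HahnSeries.SummableFamily ℝ ℂ (Fin m → ℤ))
    (hs : ∀ ν, s ν = f ν * ∏ i, (y i) ^ (ν i)) :
    0 ≤ v s.hsum ∧
    {ν : Fin m → ℤ | (f ν).coeff 0 ≠ 0}.Finite ∧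
    s.hsum.coeff 0 = ∑ᶠ ν : Fin m → ℤ, (f ν).coeff 0 * ∏ i, ((y i).coeff 0) ^ (ν i) := by
  have hQ : ∀ ν : Fin m → ℤ, v (∏ i, (y i) ^ (ν i)) = 0 ∧
      (∏ i, (y i) ^ (ν i)).coeff 0 = ∏ i, ((y i).coeff 0) ^ (ν i) := by
    intro ν
    have h := v_prod Finset.univ (fun i => (y i) ^ (ν i))
      (fun i _ => (v_zpow (hy i) (ν i)).1)
    exact ⟨h.1, h.2.trans (Finset.prod_congr rfl fun i _ => (v_zpow (hy i) (ν i)).2)⟩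
  have hsv : ∀ ν, 0 ≤ v (s ν) := by
    intro ν
    rw [hs ν, v_mul, (hQ ν).1, add_zero]
    exact hpos ν
  refine ⟨?_, ?_, ?_⟩
  · apply v_nonneg_of_coeff
    intro r hr
    rw [HahnSeries.SummableFamily.coeff_hsum]
    exact finsum_eq_zero_of_forall_eq_zero fun ν => coeff_neg_of_v_nonneg (hsv ν) hr
  · apply (hconv 0).subset
    intro ν hν
    refine ⟨HahnSeries.ne_zero_of_coeff_ne_zero hν, ?_⟩
    exact HahnSeries.addVal_le_of_coeff_ne_zero hν
  · rw [HahnSeries.SummableFamily.coeff_hsum]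
    apply finsum_congr
    intro ν
    rw [hs ν, coeff0_mul (hpos ν) (le_of_eq (hQ ν).1.symm), (hQ ν).2]
end
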